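/- For all natural numbers p ≥ 1 and q, r ≥ 0, the intersection matrix of the star-shaped weighted tree Δ_{p,q,r} — which has a central vertex of weight −3 and three legs attached to it: a leg consisting of a single vertex of weight −(p+2); a chain of r vertices of weight −2 followed by a terminal vertex of weight −(q+4); and a leg which is a path whose vertices, listed in order starting from the one adjacent to the central vertex, have weights −2 (repeated q times), −3, −2 (repeated p−1 times), −(r+3) — is negative definite. -/

import Mathlib

/-- The vertex type of a star-shaped tree with `m` legs, leg `i` consisting of a path of
`n i` vertices.  `none` is the central vertex; `some ⟨i, j⟩` is the `j`-th vertex of the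
`i`-th leg (the vertex `j = 0` being the one joined to the central vertex by an edge). -/
abbrev StarVertex (m : ℕ) (n : Fin m → ℕ) : Type := Option ((i : Fin m) × Fin (n i))

/-- The intersection matrix of the star-shaped weighted tree with `m` legs, where the central
vertex has weight `w0` and the `j`-th vertex of the `i`-th leg has weight `w i j`:  diagonal
entries are the weights, off-diagonal entries are `1` for vertices joined by an edge
(consecutive vertices of a leg, or the central vertex and the initial vertex of a leg)
and `0` otherwise. -/
def starMatrix (m : ℕ) (n : Fin m → ℕ) (w0 : ℤ) (w : Fin m → ℕ → ℤ) :
    Matrix (StarVertex m n) (StarVertex m n) ℤ :=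
  Matrix.of fun v v' =>
    match v, v' with
    | none, none => w0
    | none, some ⟨_, j⟩ => if (j : ℕ) = 0 then 1 else 0
    | some ⟨_, j⟩, none => if (j : ℕ) = 0 then 1 else 0
    | some ⟨i, j⟩, some ⟨i', j'⟩ =>
        if (i : ℕ) = (i' : ℕ) then
          if (j : ℕ) = (j' : ℕ) then w i (j : ℕ)
          else if (j : ℕ) + 1 = (j' : ℕ) ∨ (j' : ℕ) + 1 = (j : ℕ) then 1 else 0
        else 0

/-- The weights along a leg consisting of a chain of `k` vertices of weight `-2` followed by a
terminal vertex of weight `-a` (a path of `k + 1` vertices). -/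
def chainW (k : ℕ) (a : ℤ) (j : ℕ) : ℤ := if j < k then -2 else -a

/- ---------------- Auxiliary material ---------------- -/

lemma neg_def_of_dominant {ι : Type*} [Fintype ι] [DecidableEq ι]
    (Q : Matrix ι ι ℝ) (hsym : ∀ v w, Q v w = Q w v)
    (h01 : ∀ v w, v ≠ w → Q v w = 0 ∨ Q v w = 1)
    (d : ι → ℝ) (hd : ∀ v, 0 < d v)
    (hdom : ∀ v, Q v v * d v + (∑ w, if v = w then 0 else Q v w * d w) < 0) :
    ∀ x : ι → ℝ, x ≠ 0 → ∑ v, ∑ w, Q v w * x v * x w < 0 := by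
  intro x hx
  set F : ι → ι → ℝ := fun v w => (if v = w then 0 else Q v w * d w) * (x v ^ 2 / (2 * d v)) with hF
  set H : ι → ι → ℝ := fun v w => (if v = w then 0 else Q v w * d v) * (x w ^ 2 / (2 * d w)) with hH
  set G : ι → ι → ℝ := fun v w =>
    (if v = w then Q v v * x v ^ 2 else 0) + F v w + H v w with hG
  have key : ∀ v w, Q v w * x v * x w ≤ G v w := by
    intro v w
    by_cases hvw : v = w
    · subst hvw; simp [hG, hF, hH]; ring_nf; simp
    · rcases h01 v w hvw with h | h
      · simp [hG, hF, hH, hvw, h]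
      · have h1 := hd v
        have h2 := hd w
        have : G v w = (d w ^ 2 * x v ^ 2 + d v ^ 2 * x w ^ 2) / (2 * d v * d w) := by
          simp only [hG, hF, hH, if_neg hvw, h]
          field_simp
          ring
        rw [this, h, one_mul, le_div_iff₀ (by positivity)]
        nlinarith [sq_nonneg (d w * x v - d v * x w)]
  have step1 : ∑ v, ∑ w, Q v w * x v * x w ≤ ∑ v, ∑ w, G v w :=
    Finset.sum_le_sum fun v _ => Finset.sum_le_sum fun w _ => key v w
  have hHF : ∑ v, ∑ w, H v w = ∑ v, ∑ w, F v w := by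
    rw [Finset.sum_comm]
    refine Finset.sum_congr rfl fun v _ => Finset.sum_congr rfl fun w _ => ?_
    simp only [hF, hH]
    rw [hsym w v]
    congr 1
    exact if_congr eq_comm rfl rfl
  have step2 : ∑ v, ∑ w, G v w
      = ∑ v, (Q v v * d v + (∑ w, if v = w then 0 else Q v w * d w)) * (x v ^ 2 / d v) := by
    simp only [hG, Finset.sum_add_distrib, hHF]
    rw [← Finset.sum_add_distrib, ← Finset.sum_add_distrib]
    refine Finset.sum_congr rfl fun v _ => ?_
    have h1 : ∑ w, (if v = w then Q v v * x v ^ 2 else 0) = Q v v * x v ^ 2 := by simp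
    rw [h1, ← Finset.sum_mul]
    have hdv := (hd v).ne'
    field_simp
    ring
  have step3 : ∑ v, (Q v v * d v + (∑ w, if v = w then 0 else Q v w * d w)) * (x v ^ 2 / d v) < 0 := by
    obtain ⟨v₀, hv₀⟩ := Function.ne_iff.mp hx
    have hv₀' : x v₀ ≠ 0 := hv₀
    have hlt : ∑ v, (Q v v * d v + (∑ w, if v = w then 0 else Q v w * d w)) * (x v ^ 2 / d v)
        < ∑ _v : ι, (0:ℝ) := by
      apply Finset.sum_lt_sum
      · intro i _
        exact mul_nonpos_of_nonpos_of_nonneg (le_of_lt (hdom i))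
          (div_nonneg (sq_nonneg _) (hd i).le)
      · refine ⟨v₀, Finset.mem_univ _, ?_⟩
        apply mul_neg_of_neg_of_pos (hdom v₀)
        have hx2 : 0 < x v₀ ^ 2 := lt_of_le_of_ne (sq_nonneg _) (Ne.symm (pow_ne_zero 2 hv₀'))
        exact div_pos hx2 (hd v₀)
    simpa using hlt
  calc ∑ v, ∑ w, Q v w * x v * x w ≤ _ := step1
    _ = _ := step2
    _ < 0 := step3

/-! Sum manipulation helpers. -/

lemma starSum {m : ℕ} {n : Fin m → ℕ} (f : StarVertex m n → ℝ) :
    ∑ v, f v = f none + ∑ i, ∑ j, f (some ⟨i, j⟩) := by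
  rw [Fintype.sum_option]
  congr 1
  rw [← Finset.univ_sigma_univ, Finset.sum_sigma]

lemma sum_fin_ite_eq (n a : ℕ) (g : ℕ → ℝ) :
    ∑ j : Fin n, (if (j : ℕ) = a then g (j : ℕ) else 0) = if a < n then g a else 0 := by
  rw [Fin.sum_univ_eq_sum_range (fun k => if k = a then g k else 0) n,
    Finset.sum_ite_eq' (Finset.range n) a g]
  simp [Finset.mem_range]

lemma sum_fin_ite_succ (n a : ℕ) (g : ℕ → ℝ) :
    ∑ j : Fin n, (if a + 1 = (j : ℕ) then g (j : ℕ) else 0)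
      = if a + 1 < n then g (a + 1) else 0 := by
  have h : ∀ j : Fin n, (if a + 1 = (j : ℕ) then g (j : ℕ) else 0)
      = (if (j : ℕ) = a + 1 then g (j : ℕ) else 0) := fun j => if_congr eq_comm rfl rfl
  calc ∑ j : Fin n, (if a + 1 = (j : ℕ) then g (j : ℕ) else 0)
      = ∑ j : Fin n, (if (j : ℕ) = a + 1 then g (j : ℕ) else 0) :=
        Finset.sum_congr rfl fun j _ => h j
    _ = if a + 1 < n then g (a + 1) else 0 := sum_fin_ite_eq n (a+1) g

lemma sum_fin_ite_pred (n a : ℕ) (g : ℕ → ℝ) :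
    ∑ j : Fin n, (if (j : ℕ) + 1 = a then g (j : ℕ) else 0)
      = if 1 ≤ a ∧ a - 1 < n then g (a - 1) else 0 := by
  rcases a with _ | b
  · simp
  · have h : ∀ j : Fin n, (if (j : ℕ) + 1 = b + 1 then g (j : ℕ) else 0)
        = (if (j : ℕ) = b then g (j : ℕ) else 0) := fun j =>
      if_congr (by omega) rfl rfl
    calc ∑ j : Fin n, (if (j : ℕ) + 1 = b + 1 then g (j : ℕ) else 0)
        = ∑ j : Fin n, (if (j : ℕ) = b then g (j : ℕ) else 0) :=
          Finset.sum_congr rfl fun j _ => h j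
      _ = if b < n then g b else 0 := sum_fin_ite_eq n b g
      _ = if 1 ≤ b + 1 ∧ b + 1 - 1 < n then g (b + 1 - 1) else 0 := by
          simp

lemma ite_or_split {A B : Prop} [Decidable A] [Decidable B] (h : ¬(A ∧ B)) (c : ℝ) :
    (if A ∨ B then c else 0) = (if A then c else 0) + (if B then c else 0) := by
  by_cases hA : A <;> by_cases hB : B <;> simp [hA, hB] <;> tauto

/-! Generic facts about `starMatrix`. -/

lemma starMatrix_nn {m : ℕ} {n : Fin m → ℕ} (w0 : ℤ) (w : Fin m → ℕ → ℤ) :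
    starMatrix m n w0 w none none = w0 := rfl

lemma starMatrix_ns {m : ℕ} {n : Fin m → ℕ} (w0 : ℤ) (w : Fin m → ℕ → ℤ)
    (i : Fin m) (j : Fin (n i)) :
    starMatrix m n w0 w none (some ⟨i, j⟩) = if (j : ℕ) = 0 then 1 else 0 := rfl

lemma starMatrix_sn {m : ℕ} {n : Fin m → ℕ} (w0 : ℤ) (w : Fin m → ℕ → ℤ)
    (i : Fin m) (j : Fin (n i)) :
    starMatrix m n w0 w (some ⟨i, j⟩) none = if (j : ℕ) = 0 then 1 else 0 := rfl

lemma starMatrix_ss {m : ℕ} {n : Fin m → ℕ} (w0 : ℤ) (w : Fin m → ℕ → ℤ)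
    (i i' : Fin m) (j : Fin (n i)) (j' : Fin (n i')) :
    starMatrix m n w0 w (some ⟨i, j⟩) (some ⟨i', j'⟩) =
      if (i : ℕ) = (i' : ℕ) then
        if (j : ℕ) = (j' : ℕ) then w i (j : ℕ)
        else if (j : ℕ) + 1 = (j' : ℕ) ∨ (j' : ℕ) + 1 = (j : ℕ) then 1 else 0
      else 0 := rfl

lemma starMatrix_symm {m : ℕ} {n : Fin m → ℕ} (w0 : ℤ) (w : Fin m → ℕ → ℤ)
    (v v' : StarVertex m n) : starMatrix m n w0 w v v' = starMatrix m n w0 w v' v := by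
  rcases v with _ | ⟨i, j⟩ <;> rcases v' with _ | ⟨i', j'⟩
  · rfl
  · rfl
  · rfl
  · rw [starMatrix_ss, starMatrix_ss]
    by_cases hii : (i : ℕ) = (i' : ℕ)
    · have hi : i = i' := Fin.val_injective hii
      subst hi
      rw [if_pos rfl, if_pos rfl]
      by_cases hjj : (j : ℕ) = (j' : ℕ)
      · have hj : j = j' := Fin.val_injective hjj
        subst hj
        rfl
      · rw [if_neg hjj, if_neg (fun h : (j' : ℕ) = (j : ℕ) => hjj h.symm)]
        exact if_congr or_comm rfl rfl
    · rw [if_neg hii, if_neg (fun h => hii h.symm)]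

lemma starMatrix_01 {m : ℕ} {n : Fin m → ℕ} (w0 : ℤ) (w : Fin m → ℕ → ℤ)
    (v v' : StarVertex m n) (hne : v ≠ v') :
    starMatrix m n w0 w v v' = 0 ∨ starMatrix m n w0 w v v' = 1 := by
  rcases v with _ | ⟨i, j⟩ <;> rcases v' with _ | ⟨i', j'⟩
  · exact absurd rfl hne
  · rw [starMatrix_ns]; split_ifs <;> simp
  · rw [starMatrix_sn]; split_ifs <;> simp
  · rw [starMatrix_ss]
    by_cases hii : (i : ℕ) = (i' : ℕ)
    · have hi : i = i' := Fin.val_injective hii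
      subst hi
      by_cases hjj : (j : ℕ) = (j' : ℕ)
      · have hj : j = j' := Fin.val_injective hjj
        subst hj
        exact absurd rfl hne
      · rw [if_pos rfl, if_neg hjj]; split_ifs <;> simp
    · rw [if_neg hii]; simp

/-! The specific data for `Δ_{p,q,r}`. -/

def nn (p q r : ℕ) : Fin 3 → ℕ := ![1, r + 1, q + p + 1]

def ww (p q r : ℕ) : Fin 3 → ℕ → ℤ :=
  ![fun _ => -((p : ℤ) + 2), chainW r ((q : ℤ) + 4),
    fun j => if j < q then -2 else if j = q then -3 else
      if j < q + p then -2 else -((r : ℤ) + 3)]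

def Qm (p q r : ℕ) : Matrix (StarVertex 3 (nn p q r)) (StarVertex 3 (nn p q r)) ℤ :=
  starMatrix 3 (nn p q r) (-3) (ww p q r)

noncomputable def d0 (p q r : ℕ) : ℝ := 5 * ((r:ℝ)+2)^2 * ((q:ℝ)+(p:ℝ)+1)^2
noncomputable def dA (p q r : ℕ) : ℕ → ℝ := fun _ => 2 * ((r:ℝ)+2)^2 * ((q:ℝ)+(p:ℝ)+1)^2
noncomputable def dB (p q r : ℕ) : ℕ → ℝ :=
  fun k => 6 * ((q:ℝ)+(p:ℝ)+1)^2 * (((r:ℝ)+2)^2 - (k:ℝ)^2)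
noncomputable def dC (p q r : ℕ) : ℕ → ℝ :=
  fun k => 6 * ((r:ℝ)+2)^2 * (((q:ℝ)+(p:ℝ)+1)^2 - (k:ℝ)^2)

noncomputable def dd (p q r : ℕ) : StarVertex 3 (nn p q r) → ℝ := fun v =>
  match v with
  | none => d0 p q r
  | some ⟨i, j⟩ =>
      if (i:ℕ) = 0 then dA p q r (j:ℕ)
      else if (i:ℕ) = 1 then dB p q r (j:ℕ)
      else dC p q r (j:ℕ)

lemma dd_none (p q r : ℕ) : dd p q r none = d0 p q r := rfl

lemma dB_pos (p q r k : ℕ) (hk : k ≤ r) : 0 < dB p q r k := by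
  have h1 : (k:ℝ) ≤ (r:ℝ) := by exact_mod_cast hk
  have h2 : (0:ℝ) ≤ (k:ℝ) := Nat.cast_nonneg k
  have ht : (0:ℝ) < (q:ℝ)+(p:ℝ)+1 := by positivity
  have hs : (0:ℝ) < ((r:ℝ)+2)^2 - (k:ℝ)^2 := by nlinarith
  have := mul_pos (mul_pos (by norm_num : (0:ℝ) < 6) (pow_pos ht 2)) hs
  simpa [dB] using this

lemma dC_pos (p q r k : ℕ) (hk : k ≤ q + p) : 0 < dC p q r k := by
  have h1 : (k:ℝ) ≤ (q:ℝ)+(p:ℝ) := by exact_mod_cast hk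
  have h2 : (0:ℝ) ≤ (k:ℝ) := Nat.cast_nonneg k
  have hs : (0:ℝ) < (r:ℝ)+2 := by positivity
  have ht : (0:ℝ) < ((q:ℝ)+(p:ℝ)+1)^2 - (k:ℝ)^2 := by nlinarith
  have := mul_pos (mul_pos (by norm_num : (0:ℝ) < 6) (pow_pos hs 2)) ht
  simpa [dC] using this

lemma dd_pos (p q r : ℕ) : ∀ v, 0 < dd p q r v := by
  rintro (_ | ⟨⟨iv, hi⟩, j⟩)
  · show 0 < d0 p q r
    unfold d0; positivity
  · interval_cases iv
    · show 0 < dA p q r (j:ℕ)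
      unfold dA; positivity
    · show 0 < dB p q r (j:ℕ)
      have hj : (j:ℕ) < r + 1 := j.isLt
      exact dB_pos p q r _ (by omega)
    · show 0 < dC p q r (j:ℕ)
      have hj : (j:ℕ) < q + p + 1 := j.isLt
      exact dC_pos p q r _ (by omega)

/-! Evaluation of the dominance sums. -/

lemma off_some_none (p q r : ℕ) (i : Fin 3) (j : Fin (nn p q r i)) :
    (if (some ⟨i, j⟩ : StarVertex 3 (nn p q r)) = none then 0
      else ((Qm p q r (some ⟨i, j⟩) none : ℤ) : ℝ) * dd p q r none)
    = if (j : ℕ) = 0 then d0 p q r else 0 := by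
  rw [if_neg (by simp)]
  rw [show Qm p q r (some ⟨i, j⟩) none = if (j : ℕ) = 0 then 1 else 0 from rfl]
  split_ifs <;> simp [dd_none]

lemma sum_from_none (p q r : ℕ) (i' : Fin 3) (g : ℕ → ℝ)
    (hg : ∀ j' : Fin (nn p q r i'), dd p q r (some ⟨i', j'⟩) = g (j' : ℕ)) :
    ∑ j' : Fin (nn p q r i'), (if (none : StarVertex 3 (nn p q r)) = some ⟨i', j'⟩ then 0
        else ((Qm p q r none (some ⟨i', j'⟩) : ℤ) : ℝ) * dd p q r (some ⟨i', j'⟩))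
      = if 0 < nn p q r i' then g 0 else 0 := by
  have h : ∀ j' : Fin (nn p q r i'),
      (if (none : StarVertex 3 (nn p q r)) = some ⟨i', j'⟩ then 0
        else ((Qm p q r none (some ⟨i', j'⟩) : ℤ) : ℝ) * dd p q r (some ⟨i', j'⟩))
      = (if (j' : ℕ) = 0 then g (j' : ℕ) else 0) := by
    intro j'
    rw [if_neg (by simp)]
    rw [show Qm p q r none (some ⟨i', j'⟩) = if (j' : ℕ) = 0 then 1 else 0 from rfl]
    split_ifs <;> simp [hg j']
  calc ∑ j' : Fin (nn p q r i'), (if (none : StarVertex 3 (nn p q r)) = some ⟨i', j'⟩ then 0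
        else ((Qm p q r none (some ⟨i', j'⟩) : ℤ) : ℝ) * dd p q r (some ⟨i', j'⟩))
      = ∑ j' : Fin (nn p q r i'), (if (j' : ℕ) = 0 then g (j' : ℕ) else 0) :=
        Finset.sum_congr rfl fun j' _ => h j'
    _ = if 0 < nn p q r i' then g 0 else 0 := sum_fin_ite_eq _ 0 g

lemma sum_off_leg (p q r : ℕ) (i i' : Fin 3) (hii : (i : ℕ) ≠ (i' : ℕ))
    (j : Fin (nn p q r i)) :
    ∑ j' : Fin (nn p q r i'), (if (some ⟨i, j⟩ : StarVertex 3 (nn p q r)) = some ⟨i', j'⟩ then 0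
        else ((Qm p q r (some ⟨i, j⟩) (some ⟨i', j'⟩) : ℤ) : ℝ) * dd p q r (some ⟨i', j'⟩)) = 0 := by
  apply Finset.sum_eq_zero
  intro j' _
  have hQ : Qm p q r (some ⟨i, j⟩) (some ⟨i', j'⟩) = 0 := by
    rw [show Qm p q r (some ⟨i, j⟩) (some ⟨i', j'⟩) = starMatrix 3 (nn p q r) (-3) (ww p q r)
        (some ⟨i, j⟩) (some ⟨i', j'⟩) from rfl, starMatrix_ss, if_neg hii]
  split_ifs with h
  · rfl
  · rw [hQ]; simp

lemma sum_same_leg (p q r : ℕ) (i i' : Fin 3) (hii : (i : ℕ) = (i' : ℕ))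
    (j : Fin (nn p q r i)) (g : ℕ → ℝ)
    (hg : ∀ j' : Fin (nn p q r i'), dd p q r (some ⟨i', j'⟩) = g (j' : ℕ)) :
    ∑ j' : Fin (nn p q r i'), (if (some ⟨i, j⟩ : StarVertex 3 (nn p q r)) = some ⟨i', j'⟩ then 0
        else ((Qm p q r (some ⟨i, j⟩) (some ⟨i', j'⟩) : ℤ) : ℝ) * dd p q r (some ⟨i', j'⟩))
      = (if (j : ℕ) + 1 < nn p q r i' then g ((j : ℕ) + 1) else 0)
        + (if 1 ≤ (j : ℕ) ∧ (j : ℕ) - 1 < nn p q r i' then g ((j : ℕ) - 1) else 0) := by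
  have hi : i = i' := Fin.val_injective hii
  subst hi
  have h : ∀ j' : Fin (nn p q r i),
      (if (some ⟨i, j⟩ : StarVertex 3 (nn p q r)) = some ⟨i, j'⟩ then 0
        else ((Qm p q r (some ⟨i, j⟩) (some ⟨i, j'⟩) : ℤ) : ℝ) * dd p q r (some ⟨i, j'⟩))
      = (if (j : ℕ) + 1 = (j' : ℕ) then g (j' : ℕ) else 0)
        + (if (j' : ℕ) + 1 = (j : ℕ) then g (j' : ℕ) else 0) := by
    intro j'
    by_cases hjj : (j : ℕ) = (j' : ℕ)
    · have hj : j = j' := Fin.val_injective hjj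
      subst hj
      have e1 : ¬((j : ℕ) + 1 = (j : ℕ)) := by omega
      rw [if_pos rfl]
      simp only [if_neg e1]
      norm_num
    · have hne : (some ⟨i, j⟩ : StarVertex 3 (nn p q r)) ≠ some ⟨i, j'⟩ := by
        simp only [ne_eq, Option.some.injEq]
        intro hh
        exact hjj (congrArg Fin.val (eq_of_heq (Sigma.mk.inj_iff.mp hh).2))
      rw [if_neg hne]
      rw [show Qm p q r (some ⟨i, j⟩) (some ⟨i, j'⟩) = starMatrix 3 (nn p q r) (-3) (ww p q r)
          (some ⟨i, j⟩) (some ⟨i, j'⟩) from rfl, starMatrix_ss, if_pos rfl, if_neg hjj]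
      by_cases h1 : (j : ℕ) + 1 = (j' : ℕ)
      · rw [if_pos (Or.inl h1), if_pos h1, if_neg (by omega)]
        simp [hg j']
      · by_cases h2 : (j' : ℕ) + 1 = (j : ℕ)
        · rw [if_pos (Or.inr h2), if_neg h1, if_pos h2]
          simp [hg j']
        · rw [if_neg (by tauto), if_neg h1, if_neg h2]
          simp
  calc ∑ j' : Fin (nn p q r i),
        (if (some ⟨i, j⟩ : StarVertex 3 (nn p q r)) = some ⟨i, j'⟩ then 0
          else ((Qm p q r (some ⟨i, j⟩) (some ⟨i, j'⟩) : ℤ) : ℝ) * dd p q r (some ⟨i, j'⟩))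
      = ∑ j' : Fin (nn p q r i), ((if (j : ℕ) + 1 = (j' : ℕ) then g (j' : ℕ) else 0)
          + (if (j' : ℕ) + 1 = (j : ℕ) then g (j' : ℕ) else 0)) :=
        Finset.sum_congr rfl fun j' _ => h j'
    _ = _ := by
        rw [Finset.sum_add_distrib, sum_fin_ite_succ, sum_fin_ite_pred]

lemma nat_ne_01 : (0:ℕ) ≠ 1 := by omega
lemma nat_ne_02 : (0:ℕ) ≠ 2 := by omega
lemma nat_ne_10 : (1:ℕ) ≠ 0 := by omega
lemma nat_ne_12 : (1:ℕ) ≠ 2 := by omega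
lemma nat_ne_20 : (2:ℕ) ≠ 0 := by omega
lemma nat_ne_21 : (2:ℕ) ≠ 1 := by omega

lemma Qm_diag (p q r : ℕ) (i : Fin 3) (j : Fin (nn p q r i)) :
    Qm p q r (some ⟨i, j⟩) (some ⟨i, j⟩) = ww p q r i (j : ℕ) := by
  rw [show Qm p q r (some ⟨i, j⟩) (some ⟨i, j⟩) = starMatrix 3 (nn p q r) (-3) (ww p q r)
      (some ⟨i, j⟩) (some ⟨i, j⟩) from rfl, starMatrix_ss, if_pos rfl, if_pos rfl]

set_option maxHeartbeats 1600000 in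
lemma hdom_main (p q r : ℕ) (hp : 1 ≤ p) :
    ∀ v, ((Qm p q r v v : ℤ) : ℝ) * dd p q r v
        + (∑ w, if v = w then 0 else ((Qm p q r v w : ℤ) : ℝ) * dd p q r w) < 0 := by
  have hs : (0:ℝ) < (r:ℝ) + 2 := by positivity
  have ht : (0:ℝ) < (q:ℝ) + (p:ℝ) + 1 := by positivity
  have hp' : (1:ℝ) ≤ (p:ℝ) := by exact_mod_cast hp
  have hq0 : (0:ℝ) ≤ (q:ℝ) := Nat.cast_nonneg q
  have hr0 : (0:ℝ) ≤ (r:ℝ) := Nat.cast_nonneg r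
  have hst := mul_pos (pow_pos hs 2) (pow_pos ht 2)
  rintro (_ | ⟨⟨iv, hi⟩, j⟩)
  · -- central vertex
    rw [starSum, Fin.sum_univ_three,
      sum_from_none p q r 0 (dA p q r) (fun j' => rfl),
      sum_from_none p q r 1 (dB p q r) (fun j' => rfl),
      sum_from_none p q r 2 (dC p q r) (fun j' => rfl),
      if_pos rfl,
      show nn p q r 0 = 1 from rfl, show nn p q r 1 = r + 1 from rfl,
      show nn p q r 2 = q + p + 1 from rfl,
      if_pos Nat.one_pos, if_pos (Nat.succ_pos r), if_pos (Nat.succ_pos (q+p)),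
      show Qm p q r none none = -3 from rfl, dd_none]
    unfold d0 dA dB dC
    push_cast
    nlinarith [hst]
  · interval_cases iv
    · -- leg 0 : single vertex of weight -(p+2)
      have hj0 : (j:ℕ) = 0 := by have : (j:ℕ) < 1 := j.isLt; omega
      rw [starSum, Fin.sum_univ_three,
        off_some_none p q r ⟨0,hi⟩ j,
        sum_same_leg p q r ⟨0,hi⟩ 0 rfl j (dA p q r) (fun j' => rfl),
        sum_off_leg p q r ⟨0,hi⟩ 1 nat_ne_01 j,
        sum_off_leg p q r ⟨0,hi⟩ 2 nat_ne_02 j,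
        Qm_diag,
        show ww p q r ⟨0,hi⟩ (j:ℕ) = -((p:ℤ)+2) from rfl,
        show dd p q r (some ⟨⟨0,hi⟩, j⟩) = dA p q r (j:ℕ) from rfl,
        show nn p q r (0 : Fin 3) = 1 from rfl,
        if_pos hj0,
        if_neg (by omega : ¬((j:ℕ) + 1 < 1)),
        if_neg (by omega : ¬(1 ≤ (j:ℕ) ∧ (j:ℕ) - 1 < 1))]
      unfold dA d0
      push_cast
      nlinarith [hst, mul_nonneg (sub_nonneg.mpr hp') hst.le]
    · -- leg 1 : chain of r (-2)'s then -(q+4)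
      have hjr : (j:ℕ) < r + 1 := j.isLt
      rw [starSum, Fin.sum_univ_three,
        off_some_none p q r ⟨1,hi⟩ j,
        sum_off_leg p q r ⟨1,hi⟩ 0 nat_ne_10 j,
        sum_same_leg p q r ⟨1,hi⟩ 1 rfl j (dB p q r) (fun j' => rfl),
        sum_off_leg p q r ⟨1,hi⟩ 2 nat_ne_12 j,
        Qm_diag,
        show ww p q r ⟨1,hi⟩ (j:ℕ) = chainW r ((q:ℤ)+4) (j:ℕ) from rfl,
        show dd p q r (some ⟨⟨1,hi⟩, j⟩) = dB p q r (j:ℕ) from rfl,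
        show nn p q r (1 : Fin 3) = r + 1 from rfl]
      unfold chainW
      by_cases hlt : (j:ℕ) < r
      · rw [if_pos hlt, if_pos (by omega : (j:ℕ) + 1 < r + 1)]
        by_cases h0 : (j:ℕ) = 0
        · rw [if_neg (by omega : ¬(1 ≤ (j:ℕ) ∧ (j:ℕ) - 1 < r + 1)), if_pos h0]
          unfold dB d0
          rw [h0]
          push_cast
          nlinarith [hst, pow_pos ht 2]
        · rw [if_pos (by omega : 1 ≤ (j:ℕ) ∧ (j:ℕ) - 1 < r + 1), if_neg h0]
          unfold dB
          push_cast [Nat.cast_sub (by omega : 1 ≤ (j:ℕ))]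
          nlinarith [pow_pos ht 2]
      · have hjr' : (j:ℕ) = r := by omega
        rw [if_neg hlt, if_neg (by omega : ¬((j:ℕ) + 1 < r + 1))]
        by_cases h0 : (j:ℕ) = 0
        · have hr0' : r = 0 := by omega
          rw [if_neg (by omega : ¬(1 ≤ (j:ℕ) ∧ (j:ℕ) - 1 < r + 1)), if_pos h0]
          unfold dB d0
          rw [h0]
          subst hr0'
          push_cast
          nlinarith [pow_pos ht 2, mul_nonneg hq0 (pow_pos ht 2).le]
        · rw [if_pos (by omega : 1 ≤ (j:ℕ) ∧ (j:ℕ) - 1 < r + 1), if_neg h0]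
          unfold dB
          rw [hjr']
          push_cast [Nat.cast_sub (by omega : 1 ≤ r)]
          have key : (0:ℝ) < ((q:ℝ)+4)*(4*(r:ℝ)+4) - (6*(r:ℝ)+3) := by nlinarith
          nlinarith [mul_pos (pow_pos ht 2) key]
    · -- leg 2 : q (-2)'s, then -3, then (p-1) (-2)'s, then -(r+3)
      have hjm : (j:ℕ) < q + p + 1 := j.isLt
      rw [starSum, Fin.sum_univ_three,
        off_some_none p q r ⟨2,hi⟩ j,
        sum_off_leg p q r ⟨2,hi⟩ 0 nat_ne_20 j,
        sum_off_leg p q r ⟨2,hi⟩ 1 nat_ne_21 j,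
        sum_same_leg p q r ⟨2,hi⟩ 2 rfl j (dC p q r) (fun j' => rfl),
        Qm_diag,
        show ww p q r ⟨2,hi⟩ (j:ℕ)
          = (if (j:ℕ) < q then (-2:ℤ) else if (j:ℕ) = q then -3 else
              if (j:ℕ) < q + p then -2 else -((r:ℤ)+3)) from rfl,
        show dd p q r (some ⟨⟨2,hi⟩, j⟩) = dC p q r (j:ℕ) from rfl,
        show nn p q r (2 : Fin 3) = q + p + 1 from rfl]
      by_cases hterm : (j:ℕ) = q + p
      · rw [if_neg (by omega : ¬((j:ℕ) < q)), if_neg (by omega : ¬((j:ℕ) = q)),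
          if_neg (by omega : ¬((j:ℕ) < q + p)),
          if_neg (by omega : ¬((j:ℕ) + 1 < q + p + 1)),
          if_pos (by omega : 1 ≤ (j:ℕ) ∧ (j:ℕ) - 1 < q + p + 1),
          if_neg (by omega : ¬((j:ℕ) = 0))]
        unfold dC
        rw [hterm]
        push_cast [Nat.cast_sub (by omega : 1 ≤ q + p)]
        have key : (0:ℝ) < ((r:ℝ)+3)*(2*((q:ℝ)+(p:ℝ))+1) - 4*((q:ℝ)+(p:ℝ)) := by nlinarith
        nlinarith [mul_pos (pow_pos hs 2) key]
      · have hwle : (((if (j:ℕ) < q then (-2:ℤ) else if (j:ℕ) = q then -3 else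
            if (j:ℕ) < q + p then -2 else -((r:ℤ)+3)) : ℤ) : ℝ) ≤ -2 := by
          split_ifs <;> push_cast <;> linarith
        have hdCpos := dC_pos p q r (j:ℕ) (by omega)
        have hb := mul_le_mul_of_nonneg_right hwle hdCpos.le
        refine lt_of_le_of_lt (add_le_add hb le_rfl) ?_
        rw [if_pos (by omega : (j:ℕ) + 1 < q + p + 1)]
        by_cases h0 : (j:ℕ) = 0
        · rw [if_neg (by omega : ¬(1 ≤ (j:ℕ) ∧ (j:ℕ) - 1 < q + p + 1)), if_pos h0]
          unfold dC d0
          rw [h0]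
          push_cast
          nlinarith [hst, pow_pos hs 2]
        · rw [if_pos (by omega : 1 ≤ (j:ℕ) ∧ (j:ℕ) - 1 < q + p + 1), if_neg h0]
          unfold dC
          push_cast [Nat.cast_sub (by omega : 1 ≤ (j:ℕ))]
          nlinarith [pow_pos hs 2]

/-- The intersection matrix of the star-shaped weighted tree `Δ_{p,q,r}` for `p ≥ 1` (central
vertex of weight `-3`; legs: a single vertex of weight `-(p+2)`; `r` vertices of weight `-2`
then `-(q+4)`; and a path with weights `-2` (`q` times), `-3`, `-2` (`p-1` times), `-(r+3)`)
is negative definite. -/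
theorem Delta_pqr_negative_definite (p q r : ℕ) (hp : 1 ≤ p) :
    ∀ x : StarVertex 3 ![1, r + 1, q + p + 1] → ℝ, x ≠ 0 →
      ∑ v, ∑ v', ((starMatrix 3 ![1, r + 1, q + p + 1] (-3)
          ![fun _ => -((p : ℤ) + 2),
            chainW r ((q : ℤ) + 4),
            fun j => if j < q then -2 else if j = q then -3 else
              if j < q + p then -2 else -((r : ℤ) + 3)] v v' : ℤ) : ℝ)
          * x v * x v' < 0 := by
  intro x hx
  have hsym : ∀ v w : StarVertex 3 (nn p q r),
      ((Qm p q r v w : ℤ) : ℝ) = ((Qm p q r w v : ℤ) : ℝ) := fun v w => by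
    rw [show Qm p q r v w = starMatrix 3 (nn p q r) (-3) (ww p q r) v w from rfl,
      starMatrix_symm]
    rfl
  have h01 : ∀ v w : StarVertex 3 (nn p q r), v ≠ w →
      ((Qm p q r v w : ℤ) : ℝ) = 0 ∨ ((Qm p q r v w : ℤ) : ℝ) = 1 := fun v w hvw => by
    rcases starMatrix_01 (-3) (ww p q r) v w hvw with h | h
    · left; rw [show Qm p q r v w = starMatrix 3 (nn p q r) (-3) (ww p q r) v w from rfl, h]
      norm_num
    · right; rw [show Qm p q r v w = starMatrix 3 (nn p q r) (-3) (ww p q r) v w from rfl, h]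
      norm_num
  exact neg_def_of_dominant (fun v w => ((Qm p q r v w : ℤ) : ℝ)) hsym h01
    (dd p q r) (dd_pos p q r) (hdom_main p q r hp) x hx
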